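/- With notation as above (g continuous density, ξ_f = f'(1-G) - fg, f ∈ H²), for 0 ≤ s ≤ t ≤ T with G continuous: ∫ₛᵗ |ξ_f(t-u)| du ≤ 3((t-s)^{1/2} + w_G(t-s))·‖f‖_{H¹}, where ‖f‖²_{H¹} = ‖f‖²_{L²} + ‖f'‖²_{L²}. -/

import Mathlib

open MeasureTheory Set

/-- Cauchy–Schwarz: `∫₀^δ |h| ≤ √δ · √(∫₀^δ h²)`. -/
lemma cs_aux (h : ℝ → ℝ) (hm : Measurable h) {δ : ℝ} (hδ : 0 ≤ δ)
    (hsq : IntegrableOn (fun x => h x ^ 2) (Ioc 0 δ)) :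
    ∫ x in Ioc (0:ℝ) δ, |h x| ≤ Real.sqrt δ * Real.sqrt (∫ x in Ioc (0:ℝ) δ, h x ^ 2) := by
  haveI : IsFiniteMeasure (volume.restrict (Ioc (0:ℝ) δ)) :=
    ⟨by rw [Measure.restrict_apply_univ]; exact measure_Ioc_lt_top⟩
  have hconj : Real.HolderConjugate 2 2 := Real.HolderConjugate.two_two
  have hmeas : AEStronglyMeasurable (fun x => |h x|) (volume.restrict (Ioc (0:ℝ) δ)) :=
    (hm.abs).aestronglyMeasurable
  have hsq' : Integrable (fun x => |h x| ^ 2) (volume.restrict (Ioc (0:ℝ) δ)) := by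
    simpa [sq_abs, IntegrableOn] using hsq
  have hf : MemLp (fun x => |h x|) (ENNReal.ofReal 2) (volume.restrict (Ioc (0:ℝ) δ)) := by
    rw [show ENNReal.ofReal 2 = 2 by norm_num]
    exact (memLp_two_iff_integrable_sq hmeas).mpr hsq'
  have hg : MemLp (fun _ : ℝ => (1:ℝ)) (ENNReal.ofReal 2) (volume.restrict (Ioc (0:ℝ) δ)) :=
    memLp_const 1
  have key := integral_mul_le_Lp_mul_Lq_of_nonneg hconj
    (Filter.Eventually.of_forall fun x => abs_nonneg (h x))
    (Filter.Eventually.of_forall fun _ => zero_le_one) hf hg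
  simp only [mul_one] at key
  have e1 : (∫ a in Ioc (0:ℝ) δ, |h a| ^ (2:ℝ)) = ∫ a in Ioc (0:ℝ) δ, h a ^ 2 := by
    refine integral_congr_ae (Filter.Eventually.of_forall fun x => ?_)
    show |h x| ^ (2:ℝ) = h x ^ 2
    rw [show (2:ℝ) = ((2:ℕ):ℝ) by norm_num, Real.rpow_natCast, sq_abs]
  have e2 : (∫ _ in Ioc (0:ℝ) δ, ((1:ℝ) ^ (2:ℝ))) = δ := by
    simp [Real.one_rpow, Real.volume_Ioc, ENNReal.toReal_ofReal hδ, hδ]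
  rw [e1, e2] at key
  have hnn1 : 0 ≤ ∫ a in Ioc (0:ℝ) δ, h a ^ 2 :=
    setIntegral_nonneg measurableSet_Ioc fun x _ => sq_nonneg _
  calc (∫ x in Ioc (0:ℝ) δ, |h x|)
      ≤ (∫ a in Ioc (0:ℝ) δ, h a ^ 2) ^ ((1:ℝ)/2) * δ ^ ((1:ℝ)/2) := key
    _ = Real.sqrt δ * Real.sqrt (∫ x in Ioc (0:ℝ) δ, h x ^ 2) := by
        rw [← Real.sqrt_eq_rpow, ← Real.sqrt_eq_rpow, mul_comm]

/-- Sobolev-type sup bound: `f(u)² ≤ 2(‖f‖² + ‖f'‖²)` for `u ≥ 0`. -/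
lemma sup_aux (f f₁ : ℝ → ℝ) (hd1 : ∀ x, HasDerivAt f (f₁ x) x)
    (hf2 : IntegrableOn (fun x => (f x) ^ 2) (Ici 0))
    (hf12 : IntegrableOn (fun x => (f₁ x) ^ 2) (Ici 0))
    {u : ℝ} (hu : 0 ≤ u) :
    f u ^ 2 ≤ 2 * ((∫ x in Ici (0:ℝ), (f x) ^ 2) + (∫ x in Ici (0:ℝ), (f₁ x) ^ 2)) := by
  set a1 := ∫ x in Ici (0:ℝ), (f x) ^ 2 with ha1
  set a2 := ∫ x in Ici (0:ℝ), (f₁ x) ^ 2 with ha2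
  have hA1 : 0 ≤ a1 := setIntegral_nonneg measurableSet_Ici fun x _ => sq_nonneg _
  have hA2 : 0 ≤ a2 := setIntegral_nonneg measurableSet_Ici fun x _ => sq_nonneg _
  have hfc : Continuous f := by
    rw [continuous_iff_continuousAt]; exact fun x => (hd1 x).continuousAt
  have hf₁m : Measurable f₁ := by
    have : deriv f = f₁ := funext fun x => (hd1 x).deriv
    rw [← this]; exact measurable_deriv f
  -- find a point where f² is small
  obtain ⟨v, hv, hfv⟩ : ∃ v ∈ Icc u (u+1), f v ^ 2 ≤ a1 := by
    by_contra hcon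
    push_neg at hcon
    have hne : (Icc u (u+1)).Nonempty := ⟨u, le_refl u, by linarith⟩
    obtain ⟨v₀, hv₀, hmin⟩ := isCompact_Icc.exists_isMinOn hne ((hfc.pow 2).continuousOn)
    have hm0 : a1 < f v₀ ^ 2 := hcon v₀ hv₀
    have hIcc : Icc u (u+1) ⊆ Ici (0:ℝ) := fun x hx => hu.trans hx.1
    have hci : IntegrableOn (fun x => f x ^ 2) (Icc u (u+1)) := (hfc.pow 2).integrableOn_Icc
    have hlow : f v₀ ^ 2 ≤ ∫ x in Icc u (u+1), f x ^ 2 := by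
      have h1 : ∫ _ in Icc u (u+1), (f v₀ ^ 2 : ℝ) ≤ ∫ x in Icc u (u+1), f x ^ 2 :=
        setIntegral_mono_on (integrableOn_const measure_Icc_lt_top.ne) hci
          measurableSet_Icc (fun x hx => hmin hx)
      have h2 : (∫ _ in Icc u (u+1), (f v₀ ^ 2 : ℝ)) = f v₀ ^ 2 := by
        simp [Real.volume_Icc]
      linarith
    have hup : (∫ x in Icc u (u+1), f x ^ 2) ≤ a1 :=
      setIntegral_mono_set hf2 (Filter.Eventually.of_forall fun y => sq_nonneg _)
        (HasSubset.Subset.eventuallyLE hIcc)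
    linarith
  have huv : u ≤ v := hv.1
  have hIuv : Ioc u v ⊆ Ici (0:ℝ) := fun x hx => hu.trans hx.1.le
  -- FTC for f²
  have hderiv : ∀ x, HasDerivAt (fun y => f y ^ 2) (2 * f x * f₁ x) x := by
    intro x
    have := (hd1 x).fun_pow 2
    simpa [mul_comm, mul_assoc] using this
  have hbnd : ∀ x, |2 * f x * f₁ x| ≤ f x ^ 2 + f₁ x ^ 2 := by
    intro x
    have h1 : |2 * f x * f₁ x| = 2 * (|f x| * |f₁ x|) := by
      rw [abs_mul, abs_mul]; simp [mul_assoc]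
    rw [h1]
    have := two_mul_le_add_sq (|f x|) (|f₁ x|)
    calc 2 * (|f x| * |f₁ x|) = 2 * |f x| * |f₁ x| := by ring
      _ ≤ |f x| ^ 2 + |f₁ x| ^ 2 := this
      _ = f x ^ 2 + f₁ x ^ 2 := by rw [sq_abs, sq_abs]
  have hsumint : IntegrableOn (fun x => f x ^ 2 + f₁ x ^ 2) (Ioc u v) :=
    (hf2.mono_set hIuv).add (hf12.mono_set hIuv)
  have hdint : IntegrableOn (fun x => 2 * f x * f₁ x) (Ioc u v) := by
    refine Integrable.mono hsumint
      (((hfc.measurable.const_mul 2).mul hf₁m).aestronglyMeasurable) ?_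
    refine Filter.Eventually.of_forall fun x => ?_
    show ‖2 * f x * f₁ x‖ ≤ ‖f x ^ 2 + f₁ x ^ 2‖
    rw [Real.norm_eq_abs, Real.norm_eq_abs,
      abs_of_nonneg (by positivity : (0:ℝ) ≤ f x ^ 2 + f₁ x ^ 2)]
    exact hbnd x
  have hFTC : (∫ x in u..v, 2 * f x * f₁ x) = f v ^ 2 - f u ^ 2 :=
    intervalIntegral.integral_eq_sub_of_hasDerivAt (fun x _ => hderiv x)
      ((intervalIntegrable_iff_integrableOn_Ioc_of_le huv).mpr hdint)
  have habs : |∫ x in u..v, 2 * f x * f₁ x| ≤ ∫ x in u..v, |2 * f x * f₁ x| :=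
    intervalIntegral.abs_integral_le_integral_abs huv
  have h2 : (∫ x in u..v, |2 * f x * f₁ x|) ≤ ∫ x in Ioc u v, (f x ^ 2 + f₁ x ^ 2) := by
    rw [intervalIntegral.integral_of_le huv]
    exact setIntegral_mono_on hdint.abs hsumint measurableSet_Ioc fun x _ => hbnd x
  have h3 : (∫ x in Ioc u v, (f x ^ 2 + f₁ x ^ 2)) ≤ a1 + a2 := by
    rw [integral_add (hf2.mono_set hIuv) (hf12.mono_set hIuv)]
    have g1 : (∫ x in Ioc u v, f x ^ 2) ≤ a1 :=
      setIntegral_mono_set hf2 (Filter.Eventually.of_forall fun y => sq_nonneg _)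
        (HasSubset.Subset.eventuallyLE hIuv)
    have g2 : (∫ x in Ioc u v, f₁ x ^ 2) ≤ a2 :=
      setIntegral_mono_set hf12 (Filter.Eventually.of_forall fun y => sq_nonneg _)
        (HasSubset.Subset.eventuallyLE hIuv)
    linarith
  have : f u ^ 2 = f v ^ 2 - ∫ x in u..v, 2 * f x * f₁ x := by rw [hFTC]; ring
  rw [this]
  have := (neg_abs_le (∫ x in u..v, 2 * f x * f₁ x))
  linarith [habs.trans (h2.trans h3)]

/-- For the convolution kernel `ξ_f = f'(1-G) - fg` and `f ∈ H¹[0,∞)`, for `0 ≤ s ≤ t ≤ T`: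
`∫ₛᵗ |ξ_f(t-u)| du ≤ 3(√(t-s) + w_G(t-s))·‖f‖_{H¹}`. -/
theorem stmt14 (g G : ℝ → ℝ) (hgc : Continuous g) (hg0 : ∀ x, 0 ≤ g x)
    (hg1 : ∫ x in Ici (0:ℝ), g x = 1)
    (hG : ∀ x, G x = ∫ u in (0:ℝ)..x, g u)
    (T : ℝ) (hT : 0 < T)
    (wG : ℝ → ℝ)
    (hwG : ∀ a b, a ∈ Icc (0:ℝ) T → b ∈ Icc (0:ℝ) T → |G a - G b| ≤ wG |a - b|)
    (f f₁ : ℝ → ℝ)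
    (hd1 : ∀ x, HasDerivAt f (f₁ x) x)
    (hf2 : IntegrableOn (fun x => (f x) ^ 2) (Ici 0))
    (hf12 : IntegrableOn (fun x => (f₁ x) ^ 2) (Ici 0)) :
    ∀ s t : ℝ, 0 ≤ s → s ≤ t → t ≤ T →
      (∫ u in s..t, |f₁ (t - u) * (1 - G (t - u)) - f (t - u) * g (t - u)|)
        ≤ 3 * (Real.sqrt (t - s) + wG (t - s)) *
            Real.sqrt ((∫ x in Ici (0:ℝ), (f x) ^ 2) + (∫ x in Ici (0:ℝ), (f₁ x) ^ 2)) := by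
  intro s t hs hst htT
  set A1 := ∫ x in Ici (0:ℝ), (f x) ^ 2 with hA1def
  set A2 := ∫ x in Ici (0:ℝ), (f₁ x) ^ 2 with hA2def
  have hA1 : 0 ≤ A1 := setIntegral_nonneg measurableSet_Ici fun x _ => sq_nonneg _
  have hA2 : 0 ≤ A2 := setIntegral_nonneg measurableSet_Ici fun x _ => sq_nonneg _
  set N := Real.sqrt (A1 + A2) with hNdef
  have hN : 0 ≤ N := Real.sqrt_nonneg _
  set δ := t - s with hδdef
  have hδ0 : 0 ≤ δ := by linarith
  have hδT : δ ≤ T := by linarith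
  -- f continuous, f₁ measurable
  have hfc : Continuous f := by
    rw [continuous_iff_continuousAt]; exact fun x => (hd1 x).continuousAt
  have hf₁m : Measurable f₁ := by
    have : deriv f = f₁ := funext fun x => (hd1 x).deriv
    rw [← this]; exact measurable_deriv f
  -- G facts
  have hgint : IntegrableOn g (Ici 0) := by
    by_contra h
    rw [integral_undef h] at hg1; norm_num at hg1
  have hG0 : G 0 = 0 := by rw [hG, intervalIntegral.integral_same]
  have hGc : Continuous G := by
    have : G = fun x => ∫ u in (0:ℝ)..x, g u := funext hG
    rw [this]
    exact intervalIntegral.continuous_primitive (fun a b => hgc.intervalIntegrable a b) 0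
  have hGbd : ∀ x, 0 ≤ x → 0 ≤ G x ∧ G x ≤ 1 := by
    intro x hx
    rw [hG, intervalIntegral.integral_of_le hx]
    constructor
    · exact setIntegral_nonneg measurableSet_Ioc fun y _ => hg0 y
    · rw [← hg1]
      exact setIntegral_mono_set hgint (Filter.Eventually.of_forall fun y => hg0 y)
        (HasSubset.Subset.eventuallyLE (fun x hx => hx.1.le))
  -- sup bound
  have hsup : ∀ u, 0 ≤ u → |f u| ≤ Real.sqrt 2 * N := by
    intro u hu
    have h1 := sup_aux f f₁ hd1 hf2 hf12 hu
    have : |f u| = Real.sqrt (f u ^ 2) := (Real.sqrt_sq_eq_abs _).symm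
    rw [this, hNdef, ← Real.sqrt_mul (by norm_num : (0:ℝ) ≤ 2)]
    exact Real.sqrt_le_sqrt h1
  set B := Real.sqrt 2 * N with hBdef
  have hB : 0 ≤ B := mul_nonneg (Real.sqrt_nonneg _) hN
  -- change of variables
  have hsub : (∫ u in s..t, |f₁ (t - u) * (1 - G (t - u)) - f (t - u) * g (t - u)|)
      = ∫ u in (0:ℝ)..δ, |f₁ u * (1 - G u) - f u * g u| := by
    rw [intervalIntegral.integral_comp_sub_left (fun u => |f₁ u * (1 - G u) - f u * g u|) t]
    norm_num
    rfl
  have hsub01 : Ioc (0:ℝ) δ ⊆ Ici 0 := fun x hx => hx.1.le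
  -- integrability on Ioc 0 δ
  have hf₁int : IntegrableOn f₁ (Ioc 0 δ) := by
    have hbnd : IntegrableOn (fun x => 1 + f₁ x ^ 2) (Ioc 0 δ) := by
      exact (integrableOn_const measure_Ioc_lt_top.ne).add
        (hf12.mono_set hsub01)
    refine Integrable.mono hbnd hf₁m.aestronglyMeasurable (Filter.Eventually.of_forall fun x => ?_)
    rw [Real.norm_eq_abs, Real.norm_eq_abs]
    have h1 : |f₁ x| ≤ 1 + f₁ x ^ 2 := by nlinarith [abs_nonneg (f₁ x), sq_abs (f₁ x)]
    have h2 : (0:ℝ) ≤ 1 + f₁ x ^ 2 := by positivity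
    rw [abs_of_nonneg h2]; exact h1
  have hξint : IntegrableOn (fun u => |f₁ u * (1 - G u) - f u * g u|) (Ioc 0 δ) := by
    refine Integrable.abs (Integrable.sub ?_ ?_)
    · refine Integrable.mono hf₁int.abs (hf₁m.aestronglyMeasurable.mul
        ((continuous_const.sub hGc).measurable.aestronglyMeasurable)) ?_
      filter_upwards [ae_restrict_mem measurableSet_Ioc] with u hu
      rw [Real.norm_eq_abs, Real.norm_eq_abs, abs_abs, abs_mul]
      obtain ⟨h1, h2⟩ := hGbd u hu.1.le
      calc |f₁ u| * |1 - G u| ≤ |f₁ u| * 1 :=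
            mul_le_mul_of_nonneg_left
              (by rw [abs_of_nonneg (by linarith)]; linarith) (abs_nonneg _)
        _ = |f₁ u| := mul_one _
    · exact ((hfc.mul hgc).integrableOn_Ioc)
  have hRint : IntegrableOn (fun u => |f₁ u| + B * g u) (Ioc 0 δ) := by
    exact hf₁int.abs.add ((hgc.integrableOn_Ioc).const_mul B)
  -- pointwise bound
  have hpt : ∀ u ∈ Ioc (0:ℝ) δ, |f₁ u * (1 - G u) - f u * g u| ≤ |f₁ u| + B * g u := by
    intro u hu
    have hu0 : 0 ≤ u := hu.1.le
    obtain ⟨hG1, hG2⟩ := hGbd u hu0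
    calc |f₁ u * (1 - G u) - f u * g u| ≤ |f₁ u * (1 - G u)| + |f u * g u| := abs_sub _ _
      _ = |f₁ u| * |1 - G u| + |f u| * g u := by
          rw [abs_mul, abs_mul, abs_of_nonneg (hg0 u)]
      _ ≤ |f₁ u| * 1 + B * g u := by
          refine add_le_add (mul_le_mul_of_nonneg_left ?_ (abs_nonneg _))
            (mul_le_mul_of_nonneg_right (hsup u hu0) (hg0 u))
          rw [abs_of_nonneg (by linarith)]; linarith
      _ = |f₁ u| + B * g u := by ring
  -- main estimate
  rw [hsub, intervalIntegral.integral_of_le hδ0]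
  have step1 : (∫ u in Ioc (0:ℝ) δ, |f₁ u * (1 - G u) - f u * g u|)
      ≤ ∫ u in Ioc (0:ℝ) δ, (|f₁ u| + B * g u) :=
    setIntegral_mono_on hξint hRint measurableSet_Ioc hpt
  have step2 : (∫ u in Ioc (0:ℝ) δ, (|f₁ u| + B * g u))
      = (∫ u in Ioc (0:ℝ) δ, |f₁ u|) + B * ∫ u in Ioc (0:ℝ) δ, g u := by
    rw [integral_add hf₁int.abs ((hgc.integrableOn_Ioc).const_mul B), integral_const_mul]
  have hGδ : (∫ u in Ioc (0:ℝ) δ, g u) ≤ wG δ := by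
    have h1 : G δ = ∫ u in Ioc (0:ℝ) δ, g u := by
      rw [hG, intervalIntegral.integral_of_le hδ0]
    have h2 := hwG δ 0 ⟨hδ0, hδT⟩ ⟨le_refl 0, hT.le⟩
    rw [hG0, sub_zero, sub_zero, abs_of_nonneg hδ0] at h2
    calc (∫ u in Ioc (0:ℝ) δ, g u) = G δ := h1.symm
      _ ≤ |G δ| := le_abs_self _
      _ ≤ wG δ := h2
  have hwG0 : 0 ≤ wG δ := by
    have h2 := hwG t s ⟨hs.trans hst, htT⟩ ⟨hs, hst.trans htT⟩
    rw [show |t - s| = δ by rw [abs_of_nonneg hδ0]] at h2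
    exact (abs_nonneg _).trans h2
  have hsδ : 0 ≤ Real.sqrt δ := Real.sqrt_nonneg _
  have step3 : (∫ u in Ioc (0:ℝ) δ, |f₁ u|) ≤ Real.sqrt δ * N := by
    have h1 := cs_aux f₁ hf₁m hδ0 (hf12.mono_set hsub01)
    refine h1.trans (mul_le_mul_of_nonneg_left ?_ hsδ)
    rw [hNdef]
    refine Real.sqrt_le_sqrt ?_
    have h3 : (∫ x in Ioc (0:ℝ) δ, f₁ x ^ 2) ≤ A2 :=
      setIntegral_mono_set hf12 (Filter.Eventually.of_forall fun y => sq_nonneg _)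
        (HasSubset.Subset.eventuallyLE hsub01)
    linarith
  have hs2 : Real.sqrt 2 ≤ 3 := by
    nlinarith [Real.sq_sqrt (by norm_num : (0:ℝ) ≤ 2), Real.sqrt_nonneg 2]
  calc (∫ u in Ioc (0:ℝ) δ, |f₁ u * (1 - G u) - f u * g u|)
      ≤ (∫ u in Ioc (0:ℝ) δ, |f₁ u|) + B * ∫ u in Ioc (0:ℝ) δ, g u := step1.trans step2.le
    _ ≤ Real.sqrt δ * N + B * wG δ := by
        have := mul_le_mul_of_nonneg_left hGδ hB
        linarith
    _ ≤ 3 * (Real.sqrt δ + wG δ) * N := by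
        rw [hBdef]
        nlinarith [mul_nonneg hsδ hN, mul_nonneg hwG0 hN,
          mul_le_mul_of_nonneg_right hs2 (mul_nonneg hN hwG0)]
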